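/- Let d ≥ 3 be an odd integer, ζ a primitive d-th root of unity, and w = ζ + ζ² + ⋯ + ζ^{(d−1)/2} ∈ ℤ[ζ]. Then w is a unit in ℤ[ζ], and 1 + w + \bar{w} = 0, where \bar{w} denotes the image of w under the automorphism ζ ↦ ζ^{-1}. -/

import Mathlib

lemma sum_Icc_one_eq_sum_range {M : Type*} [AddCommMonoid M] (f : ℕ → M) (m : ℕ) :
    ∑ i ∈ Finset.Icc 1 m, f i = ∑ i ∈ Finset.range m, f (i + 1) := by
  induction m with
  | zero => simp
  | succ n ih =>
      rw [Finset.sum_Icc_succ_top (by omega), ih, Finset.sum_range_succ]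

/-- Let `d ≥ 3` be odd, `ζ` a primitive `d`-th root of unity and
`w = ζ + ζ² + ⋯ + ζ^((d−1)/2) ∈ ℤ[ζ]`.  Then `w` is a unit of `ℤ[ζ]` and
`1 + w + σ(w) = 0`, where `σ` is the automorphism of `ℤ[ζ]` with `σ ζ = ζ⁻¹`. -/
theorem w_unit_and_trace_relation
    (d : ℕ) (hd : 3 ≤ d) (hodd : Odd d) (ζ : ℂ) (hζ : IsPrimitiveRoot ζ d)
    (σ : Algebra.adjoin ℤ ({ζ} : Set ℂ) ≃ₐ[ℤ] Algebra.adjoin ℤ ({ζ} : Set ℂ))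
    (hσ : ((σ ⟨ζ, Algebra.self_mem_adjoin_singleton ℤ ζ⟩ :
        Algebra.adjoin ℤ ({ζ} : Set ℂ)) : ℂ) = ζ⁻¹) :
    let R := Algebra.adjoin ℤ ({ζ} : Set ℂ)
    let z : R := ⟨ζ, Algebra.self_mem_adjoin_singleton ℤ ζ⟩
    let w : R := ∑ i ∈ Finset.Icc 1 ((d - 1) / 2), z ^ i
    IsUnit w ∧ 1 + w + σ w = 0 := by
  intro R z w
  obtain ⟨m, hm⟩ := hodd
  have hm1 : 1 ≤ m := by omega
  have hdm : (d - 1) / 2 = m := by omega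
  have hd1 : (1 : ℕ) < d := by omega
  have hzd : ζ ^ d = 1 := hζ.pow_eq_one
  have hzne1 : ζ - 1 ≠ 0 := sub_ne_zero.mpr (hζ.ne_one hd1)
  have hzm1 : ζ ^ m - 1 ≠ 0 :=
    sub_ne_zero.mpr (hζ.pow_ne_one_of_pos_of_lt (by omega) (by omega))
  -- coercion of w
  have hw : (w : ℂ) = ∑ i ∈ Finset.range m, ζ ^ (i + 1) := by
    simp only [w, hdm, AddSubmonoidClass.coe_finset_sum, SubmonoidClass.coe_pow]
    exact sum_Icc_one_eq_sum_range _ m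
  have hwgeo : (w : ℂ) = ζ * ∑ i ∈ Finset.range m, ζ ^ i := by
    rw [hw, Finset.mul_sum]
    exact Finset.sum_congr rfl fun i _ => by ring
  -- the inverse
  set v : R := z ^ (2 * m) * ∑ i ∈ Finset.range (2 * m - 1), (z ^ m) ^ i with hv
  have hvc : (v : ℂ) = ζ ^ (2 * m) * ∑ i ∈ Finset.range (2 * m - 1), (ζ ^ m) ^ i := by
    simp [hv, z]
  have hpow : (ζ ^ m) ^ (2 * m - 1) = ζ := by
    obtain ⟨k, hk⟩ : ∃ k, m = k + 1 := ⟨m - 1, by omega⟩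
    have e2 : m * (2 * m - 1) = k * d + 1 := by
      subst hk; rw [hm]; have : 2 * (k + 1) - 1 = 2 * k + 1 := by omega
      rw [this]; ring
    rw [← pow_mul, e2, pow_add, mul_comm k d, pow_mul, hzd, one_pow, one_mul, pow_one]
  have hmul : (w : ℂ) * (v : ℂ) = 1 := by
    have key : ((w : ℂ) * (v : ℂ)) * ((ζ - 1) * (ζ ^ m - 1)) =
        1 * ((ζ - 1) * (ζ ^ m - 1)) := by
      rw [hwgeo, hvc]
      have g1 : (∑ i ∈ Finset.range m, ζ ^ i) * (ζ - 1) = ζ ^ m - 1 := geom_sum_mul ζ m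
      have g2 : (∑ i ∈ Finset.range (2 * m - 1), (ζ ^ m) ^ i) * (ζ ^ m - 1)
          = ζ - 1 := by rw [geom_sum_mul, hpow]
      have hz2m1 : ζ ^ (2 * m + 1) = 1 := by rw [← hm]; exact hzd
      calc ζ * (∑ i ∈ Finset.range m, ζ ^ i) *
            (ζ ^ (2 * m) * ∑ i ∈ Finset.range (2 * m - 1), (ζ ^ m) ^ i) *
            ((ζ - 1) * (ζ ^ m - 1))
          = ζ * ζ ^ (2 * m) * ((∑ i ∈ Finset.range m, ζ ^ i) * (ζ - 1)) *
            ((∑ i ∈ Finset.range (2 * m - 1), (ζ ^ m) ^ i) * (ζ ^ m - 1)) := by ring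
        _ = ζ ^ (2 * m + 1) * (ζ ^ m - 1) * (ζ - 1) := by
            rw [g1, g2]; ring
        _ = 1 * ((ζ - 1) * (ζ ^ m - 1)) := by rw [hz2m1]; ring
    exact mul_right_cancel₀ (mul_ne_zero hzne1 hzm1) key
  have hwv : w * v = 1 := by
    ext
    push_cast
    exact hmul
  refine ⟨IsUnit.of_mul_eq_one (a := w) v hwv, ?_⟩
  -- second part
  have hσw : ((σ w : R) : ℂ) = ∑ i ∈ Finset.range m, (ζ⁻¹) ^ (i + 1) := by
    simp only [w, hdm, map_sum, map_pow]
    simp only [AddSubmonoidClass.coe_finset_sum, SubmonoidClass.coe_pow, z, hσ]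
    exact sum_Icc_one_eq_sum_range _ m
  have hgeom : ∑ i ∈ Finset.range d, ζ ^ i = 0 := hζ.geom_sum_eq_zero hd1
  have hzne0 : ζ ≠ 0 := hζ.ne_zero (by omega)
  have hsplit : ∑ i ∈ Finset.range d, ζ ^ i
      = (∑ i ∈ Finset.range (m + 1), ζ ^ i) +
        ∑ i ∈ Finset.range m, ζ ^ (m + 1 + i) := by
    have : d = m + 1 + m := by omega
    rw [this, Finset.sum_range_add]
  have hrefl : ∑ i ∈ Finset.range m, ζ ^ (m + 1 + i)
      = ∑ i ∈ Finset.range m, (ζ⁻¹) ^ (i + 1) := by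
    rw [← Finset.sum_range_reflect (fun i => ζ ^ (m + 1 + i)) m]
    refine Finset.sum_congr rfl fun i hi => ?_
    have him : i < m := Finset.mem_range.mp hi
    have h1 : m + 1 + (m - 1 - i) = 2 * m - i := by omega
    rw [h1]
    have hz2m1 : ζ ^ (2 * m + 1) = 1 := by rw [← hm]; exact hzd
    have : ζ ^ (2 * m - i) * ζ ^ (i + 1) = 1 := by
      rw [← pow_add]
      have : 2 * m - i + (i + 1) = 2 * m + 1 := by omega
      rw [this, hz2m1]
    rw [inv_pow]
    exact eq_inv_of_mul_eq_one_left this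
  have hfirst : ∑ i ∈ Finset.range (m + 1), ζ ^ i
      = 1 + ∑ i ∈ Finset.range m, ζ ^ (i + 1) := by
    rw [Finset.sum_range_succ' (fun i => ζ ^ i) m]
    simp [add_comm]
  have hC : (1 : ℂ) + (w : ℂ) + ((σ w : R) : ℂ) = 0 := by
    rw [hw, hσw, ← hrefl]
    rw [← hgeom, hsplit, hfirst]
  ext
  push_cast
  exact hC
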